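/- Let P(λ) be a real T-even matrix polynomial of odd degree d, ℓ = (d+1)/2, and L_P(λ) the 2×2 block pencil with (1,1)-block M_P(λ), (1,2)-block L_{ℓ-1}(-λ)^T ⊗ I_n, (2,1)-block L_{ℓ-1}(λ) ⊗ I_n, and (2,2)-block zero. Then L_P(λ)^T = L_P(-λ); equivalently, writing L_P(λ) = λX + Y, the matrix X is skew-symmetric and Y is symmetric. -/

import Mathlib

open Matrix

noncomputable def MPmat (n d : ℕ) (P : ℕ → Matrix (Fin n) (Fin n) ℝ) (t : ℝ) :
    Matrix (Fin ((d + 1) / 2) × Fin n) (Fin ((d + 1) / 2) × Fin n) ℝ :=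
  Matrix.of fun p q =>
    if p.1 = q.1 then
      ((-1 : ℝ) ^ (p.1 : ℕ) •
        (t • P (d - 2 * (p.1 : ℕ)) + P (d - 2 * (p.1 : ℕ) - 1))) p.2 q.2
    else 0

noncomputable def LkR (l : ℕ) (t : ℝ) : Matrix (Fin (l - 1)) (Fin l) ℝ :=
  Matrix.of fun i j =>
    if (j : ℕ) = (i : ℕ) then 1 else if (j : ℕ) = (i : ℕ) + 1 then -t else 0

noncomputable def LkIR (n l : ℕ) (t : ℝ) :
    Matrix (Fin (l - 1) × Fin n) (Fin l × Fin n) ℝ :=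
  Matrix.of fun p q => LkR l t p.1 q.1 * (if p.2 = q.2 then 1 else 0)

/-- The block pencil `L_P(λ) = [[M_P(λ), L_{ℓ-1}(-λ)ᵀ⊗I_n], [L_{ℓ-1}(λ)⊗I_n, 0]]`. -/
noncomputable def LPmat (n d : ℕ) (P : ℕ → Matrix (Fin n) (Fin n) ℝ) (t : ℝ) :
    Matrix ((Fin ((d + 1) / 2) × Fin n) ⊕ (Fin ((d + 1) / 2 - 1) × Fin n))
      ((Fin ((d + 1) / 2) × Fin n) ⊕ (Fin ((d + 1) / 2 - 1) × Fin n)) ℝ :=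
  Matrix.fromBlocks (MPmat n d P t) ((LkIR n ((d + 1) / 2) (-t))ᵀ)
    (LkIR n ((d + 1) / 2) t) 0


lemma MP_trans (n d : ℕ) (hd : Odd d) (P : ℕ → Matrix (Fin n) (Fin n) ℝ)
    (hP : ∀ k, (P k)ᵀ = (-1 : ℝ) ^ k • P k) (t : ℝ) :
    (MPmat n d P t)ᵀ = MPmat n d P (-t) := by
  obtain ⟨m, hm⟩ := hd
  ext ⟨i, a⟩ ⟨j, b⟩
  simp only [MPmat, transpose_apply, of_apply]
  by_cases h : i = j
  · subst h
    simp only [if_pos rfl]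
    have hi : (i : ℕ) ≤ m := by
      have := i.isLt
      omega
    have h1 : d - 2 * (i : ℕ) = 2 * (m - i) + 1 := by omega
    have h2 : d - 2 * (i : ℕ) - 1 = 2 * (m - i) := by omega
    have e1 : P (d - 2 * (i : ℕ)) b a = - P (d - 2 * (i : ℕ)) a b := by
      have := congrFun (congrFun (hP (d - 2 * (i : ℕ))) a) b
      simp only [transpose_apply, Matrix.smul_apply, smul_eq_mul, h1, pow_succ, pow_mul] at this ⊢
      simp at this
      linarith [this]
    have e2 : P (d - 2 * (i : ℕ) - 1) b a = P (d - 2 * (i : ℕ) - 1) a b := by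
      have := congrFun (congrFun (hP (d - 2 * (i : ℕ) - 1)) a) b
      simp only [transpose_apply, Matrix.smul_apply, smul_eq_mul, h2, pow_mul] at this ⊢
      simp at this
      linarith [this]
    simp only [Matrix.smul_apply, Matrix.add_apply, smul_eq_mul, e1, e2]
    ring
  · rw [if_neg h, if_neg (fun h' => h h'.symm)]

/-- for a T-even `P` of odd degree `d`, `L_P(λ)ᵀ = L_P(-λ)`. -/
theorem stmt13 (n d : ℕ) (hd : Odd d) (P : ℕ → Matrix (Fin n) (Fin n) ℝ)
    (hP : ∀ k, (P k)ᵀ = (-1 : ℝ) ^ k • P k) (t : ℝ) :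
    (LPmat n d P t)ᵀ = LPmat n d P (-t) := by
  unfold LPmat
  rw [fromBlocks_transpose, transpose_transpose, MP_trans n d hd P hP t, transpose_zero, neg_neg]
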